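/- If φ : N → M is a degree-preserving R-homomorphism between squarefree P-modules, then ker φ, im φ, and coker φ are squarefree P-modules. -/

import Mathlib

open Classical DirectSum

/-- `P̂ = P \ {⊥}`. -/
abbrev Phat (P : Type) [PartialOrder P] [OrderBot P] := {σ : P // σ ≠ ⊥}

variable {K : Type} [Field K] {P : Type} [Fintype P] [PartialOrder P] [OrderBot P]
  [DecidableEq P]

/-- `supp u` is a face of the order complex `Δ_P`, i.e. a chain of `P̂`. -/
def ChainSupp (u : Phat P →₀ ℕ) : Prop :=
  ∀ σ ∈ u.support, ∀ τ ∈ u.support, (σ : P) ≤ (τ : P) ∨ (τ : P) ≤ (σ : P)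

/-- `τ ≤ max (supp u)` (in particular `supp u` has a maximum). -/
def LeMaxSupp (u : Phat P →₀ ℕ) (τ : Phat P) : Prop :=
  ∃ ρ ∈ u.support, (τ : P) ≤ (ρ : P) ∧ ∀ σ ∈ u.support, (σ : P) ≤ (ρ : P)

/-- A squarefree `P`-module: a finitely generated `ℕ^{|P̂|}`-graded module `M` over
`R = K[x_σ : σ ∈ P̂]` (the grading `π` being given by `K`-subspaces with
`x_τ · M_u ⊆ M_{u + e_τ}`) such that
(a) `M_u = 0` whenever `supp u ∉ Δ_P`, and
(b) `×x_τ : M_u → M_{u+e_τ}` is bijective whenever `supp (u + e_τ) ∈ Δ_P` and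
`τ ≤ max (supp u)`. -/
def IsSquarefreePMod (M : Type) [AddCommGroup M]
    [Module (MvPolynomial (Phat P) K) M] [Module K M]
    [IsScalarTower K (MvPolynomial (Phat P) K) M]
    (π : (Phat P →₀ ℕ) → Submodule K M) : Prop :=
  DirectSum.IsInternal π ∧
  Module.Finite (MvPolynomial (Phat P) K) M ∧
  (∀ u, FiniteDimensional K (π u)) ∧
  (∀ (u) (τ : Phat P), ∀ x ∈ π u,
    (MvPolynomial.X τ : MvPolynomial (Phat P) K) • x ∈ π (u + Finsupp.single τ 1)) ∧
  (∀ u, ¬ ChainSupp u → π u = ⊥) ∧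
  (∀ (u) (τ : Phat P), ChainSupp (u + Finsupp.single τ 1) → LeMaxSupp u τ →
    Set.BijOn (fun x => (MvPolynomial.X τ : MvPolynomial (Phat P) K) • x)
      (↑(π u) : Set M) (↑(π (u + Finsupp.single τ 1)) : Set M))

/-- The exponent vector `e_σ` (with `e_⊥ = 0`). -/
noncomputable def eVec (σ : P) : Phat P →₀ ℕ :=
  if h : σ = ⊥ then 0 else Finsupp.single ⟨σ, h⟩ 1

section Helpers
variable {K₀ ι M₀ : Type*} [Field K₀] [AddCommGroup M₀] [Module K₀ M₀]
  {π : ι → Submodule K₀ M₀}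

lemma comp_eq_zero_of_indep (hind : iSupIndep π) (f : ι →₀ M₀)
    (hf : ∀ j, f j ∈ π j) (hsum : (f.sum fun _ m => m) = 0) (i : ι) : f i = 0 := by
  classical
  by_cases hi : i ∈ f.support
  · have h1 : f i + ∑ j ∈ f.support.erase i, f j = 0 := by
      rw [Finset.add_sum_erase _ _ hi]; exact hsum
    have h2 : f i = -∑ j ∈ f.support.erase i, f j := by
      rw [eq_neg_iff_add_eq_zero]; exact h1
    have h3 : f i ∈ ⨆ j, ⨆ _ : j ≠ i, π j := by
      rw [h2]
      exact Submodule.neg_mem _ (Submodule.sum_mem _ fun j hj =>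
        Submodule.mem_iSup_of_mem j (Submodule.mem_iSup_of_mem (Finset.mem_erase.mp hj).1 (hf j)))
    exact Submodule.disjoint_def.mp (hind i) _ (hf i) h3
  · exact Finsupp.notMem_support_iff.mp hi

lemma internal_comap [DecidableEq ι] (h : DirectSum.IsInternal π) (S : Submodule K₀ M₀)
    (hS : ∀ (f : ι →₀ M₀), (∀ j, f j ∈ π j) → (f.sum fun _ m => m) ∈ S → ∀ i, f i ∈ S) :
    DirectSum.IsInternal fun i => (π i).comap S.subtype := by
  rw [DirectSum.isInternal_submodule_iff_iSupIndep_and_iSup_eq_top] at h ⊢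
  constructor
  · intro i
    rw [Submodule.disjoint_def]
    intro x hx1 hx2
    have hle : (⨆ j, ⨆ _ : j ≠ i, (π j).comap S.subtype) ≤
        Submodule.comap S.subtype (⨆ j, ⨆ _ : j ≠ i, π j) :=
      iSup₂_le fun j hj => Submodule.comap_mono (le_iSup₂ (f := fun j _ => π j) j hj)
    have hx2' : (x : M₀) ∈ ⨆ j, ⨆ _ : j ≠ i, π j := hle hx2
    have : (x : M₀) = 0 := Submodule.disjoint_def.mp (h.1 i) _ hx1 hx2'
    exact Subtype.ext this
  · rw [eq_top_iff]
    rintro ⟨x, hxS⟩ _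
    have hx : x ∈ iSup π := h.2 ▸ Submodule.mem_top
    rw [Submodule.mem_iSup_iff_exists_finsupp] at hx
    obtain ⟨f, hf, hfs⟩ := hx
    have hfS : ∀ j, f j ∈ S := hS f hf (hfs ▸ hxS)
    rw [Submodule.mem_iSup_iff_exists_finsupp]
    refine ⟨⟨f.support, fun j => ⟨f j, hfS j⟩, fun j => ?_⟩, fun j => hf j, ?_⟩
    · rw [Finsupp.mem_support_iff]
      simp [Subtype.ext_iff]
    · apply Subtype.ext
      rw [Finsupp.sum, Submodule.coe_sum]
      exact hfs

lemma internal_map [DecidableEq ι] (h : DirectSum.IsInternal π) {Q : Type*} [AddCommGroup Q]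
    [Module K₀ Q] (q : M₀ →ₗ[K₀] Q) (hq : Function.Surjective q)
    (hS : ∀ (f : ι →₀ M₀), (∀ j, f j ∈ π j) → (f.sum fun _ m => m) ∈ LinearMap.ker q →
      ∀ i, f i ∈ LinearMap.ker q) :
    DirectSum.IsInternal fun i => (π i).map q := by
  rw [DirectSum.isInternal_submodule_iff_iSupIndep_and_iSup_eq_top] at h ⊢
  constructor
  · intro i
    rw [Submodule.disjoint_def]
    intro y hy1 hy2
    obtain ⟨xi, hxi, rfl⟩ := hy1
    have hle : (⨆ j, ⨆ _ : j ≠ i, (π j).map q) ≤ Submodule.map q (⨆ j, ⨆ _ : j ≠ i, π j) :=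
      iSup₂_le fun j hj => Submodule.map_mono (le_iSup₂ (f := fun j _ => π j) j hj)
    obtain ⟨x', hx', hqx'⟩ := hle hy2
    rw [SetLike.mem_coe, Submodule.mem_iSup_iff_exists_finsupp] at hx'
    obtain ⟨f, hf, hfs⟩ := hx'
    have hfπ : ∀ j, f j ∈ π j := by
      intro j
      by_cases hj : j = i
      · subst hj
        have hfi : f j = 0 := by simpa using hf j
        rw [hfi]; exact (π j).zero_mem
      · have := hf j
        rwa [iSup_pos hj] at this
    set g : ι →₀ M₀ := Finsupp.single i xi - f with hg
    have hgπ : ∀ j, g j ∈ π j := by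
      intro j
      by_cases hj : j = i
      · subst hj
        have hfi : f j = 0 := by
          have := hf j; simpa using this
        simpa [hg, hfi] using hxi
      · simp [hg, Finsupp.single_eq_of_ne' (Ne.symm hj), Submodule.neg_mem, hfπ j]
    have hgsum : (g.sum fun _ m => m) = xi - x' := by
      rw [hg, Finsupp.sum_sub_index (fun _ _ _ => rfl), Finsupp.sum_single_index rfl, hfs]
    have : (g.sum fun _ m => m) ∈ LinearMap.ker q := by
      rw [hgsum, LinearMap.mem_ker, map_sub, hqx', sub_self]
    have := hS g hgπ this i
    have hgi : g i = xi := by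
      have hfi : f i = 0 := by have := hf i; simpa using this
      simp [hg, hfi]
    rw [hgi] at this
    exact this
  · rw [← Submodule.map_iSup, h.2, Submodule.map_top, LinearMap.range_eq_top]
    exact hq
  
end Helpers

set_option maxHeartbeats 1000000
set_option synthInstance.maxHeartbeats 400000

/-- Lemma 2.2.  If `φ : N → M` is a degree-preserving
`R`-homomorphism between squarefree `P`-modules, then `ker φ`, `im φ` and
`coker φ` (with their induced gradings) are squarefree `P`-modules. -/
theorem ker_im_coker_squarefree
    (N M : Type) [AddCommGroup N] [AddCommGroup M]
    [Module (MvPolynomial (Phat P) K) N] [Module K N]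
    [IsScalarTower K (MvPolynomial (Phat P) K) N]
    [Module (MvPolynomial (Phat P) K) M] [Module K M]
    [IsScalarTower K (MvPolynomial (Phat P) K) M]
    (πN : (Phat P →₀ ℕ) → Submodule K N) (πM : (Phat P →₀ ℕ) → Submodule K M)
    (hN : IsSquarefreePMod (K := K) N πN) (hM : IsSquarefreePMod (K := K) M πM)
    (φ : N →ₗ[MvPolynomial (Phat P) K] M)
    (hdeg : ∀ u, ∀ x ∈ πN u, φ x ∈ πM u) :
    IsSquarefreePMod (K := K) ↥(LinearMap.ker φ)
      (fun u => ((πN u).comap ((LinearMap.ker φ).restrictScalars K).subtype :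
        Submodule K ↥(LinearMap.ker φ))) ∧
    IsSquarefreePMod (K := K) ↥(LinearMap.range φ)
      (fun u => ((πM u).comap ((LinearMap.range φ).restrictScalars K).subtype :
        Submodule K ↥(LinearMap.range φ))) ∧
    IsSquarefreePMod (K := K) (M ⧸ LinearMap.range φ)
      (fun u => (πM u).map ((LinearMap.range φ).mkQ.restrictScalars K)) := by
  classical
  obtain ⟨hNint, hNfin, hNfd, hNmul, hNvan, hNbij⟩ := hN
  obtain ⟨hMint, hMfin, hMfd, hMmul, hMvan, hMbij⟩ := hM
  have hNind : iSupIndep πN :=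
    ((DirectSum.isInternal_submodule_iff_iSupIndep_and_iSup_eq_top πN).mp hNint).1
  have hNtop : iSup πN = ⊤ :=
    ((DirectSum.isInternal_submodule_iff_iSupIndep_and_iSup_eq_top πN).mp hNint).2
  have hMind : iSupIndep πM :=
    ((DirectSum.isInternal_submodule_iff_iSupIndep_and_iSup_eq_top πM).mp hMint).1
  -- kernel is homogeneous
  have hker : ∀ (f : (Phat P →₀ ℕ) →₀ N), (∀ j, f j ∈ πN j) →
      (f.sum fun _ m => m) ∈ LinearMap.ker φ → ∀ i, f i ∈ LinearMap.ker φ := by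
    intro f hf hsum i
    have hsum0 : ((Finsupp.mapRange ⇑φ (map_zero φ) f).sum fun _ m => m) = 0 := by
      rw [Finsupp.sum_mapRange_index (fun _ => rfl)]
      have h2 : (f.sum fun _ b => φ b) = φ (f.sum fun _ b => b) := by
        rw [Finsupp.sum, Finsupp.sum, map_sum]
      rw [h2, LinearMap.mem_ker.mp hsum]
    have := comp_eq_zero_of_indep hMind (Finsupp.mapRange ⇑φ (map_zero φ) f)
      (fun j => by rw [Finsupp.mapRange_apply]; exact hdeg j _ (hf j)) hsum0 i
    rw [Finsupp.mapRange_apply] at this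
    exact LinearMap.mem_ker.mpr this
  -- range is homogeneous, with homogeneous preimages
  have hrange : ∀ (f : (Phat P →₀ ℕ) →₀ M), (∀ j, f j ∈ πM j) →
      (f.sum fun _ m => m) ∈ LinearMap.range φ → ∀ i, ∃ w ∈ πN i, φ w = f i := by
    intro f hf hmem i
    obtain ⟨x, hx⟩ := hmem
    have hxtop : x ∈ iSup πN := hNtop ▸ Submodule.mem_top
    rw [Submodule.mem_iSup_iff_exists_finsupp] at hxtop
    obtain ⟨g, hg, hgs⟩ := hxtop
    have hFsum : ((f - Finsupp.mapRange ⇑φ (map_zero φ) g).sum fun _ m => m) = 0 := by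
      rw [Finsupp.sum_sub_index (fun _ _ _ => rfl)]
      rw [Finsupp.sum_mapRange_index (fun _ => rfl)]
      have h2 : (g.sum fun _ b => φ b) = φ (g.sum fun _ b => b) := by
        rw [Finsupp.sum, Finsupp.sum, map_sum]
      rw [h2, hgs, hx, sub_self]
    have := comp_eq_zero_of_indep hMind _
      (fun j => by
        rw [Finsupp.sub_apply, Finsupp.mapRange_apply]
        exact Submodule.sub_mem _ (hf j) (hdeg j _ (hg j))) hFsum i
    rw [Finsupp.sub_apply, Finsupp.mapRange_apply, sub_eq_zero] at this
    exact ⟨g i, hg i, this.symm⟩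
  have hrange1 : ∀ u, ∀ y ∈ πM u, y ∈ LinearMap.range φ → ∃ w ∈ πN u, φ w = y := by
    intro u y hy hmem
    have hpieces : ∀ j, (Finsupp.single u y) j ∈ πM j := by
      intro j
      rcases eq_or_ne u j with rfl | hj
      · simpa using hy
      · rw [Finsupp.single_eq_of_ne' hj]
        exact (πM j).zero_mem
    have hsum : ((Finsupp.single u y).sum fun _ m => m) = y := Finsupp.sum_single_index rfl
    obtain ⟨w, hw, hww⟩ := hrange (Finsupp.single u y) hpieces (by rwa [hsum]) u
    exact ⟨w, hw, by rwa [Finsupp.single_eq_same] at hww⟩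
  haveI : Finite (Phat P) := Subtype.finite
  haveI : IsNoetherian (MvPolynomial (Phat P) K) N :=
    isNoetherian_of_isNoetherianRing_of_finite (MvPolynomial (Phat P) K) N
  refine ⟨⟨?_, ?_, ?_, ?_, ?_, ?_⟩, ⟨?_, ?_, ?_, ?_, ?_, ?_⟩, ⟨?_, ?_, ?_, ?_, ?_, ?_⟩⟩
  -- ========== KERNEL ==========
  · exact internal_comap hNint _ hker
  · exact Module.Finite.iff_fg.mpr (IsNoetherian.noetherian _)
  · intro u
    haveI := hNfd u
    beta_reduce
    refine FiniteDimensional.of_injective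
      (LinearMap.codRestrict (πN u) (((LinearMap.ker φ).restrictScalars K).subtype.comp
        ((πN u).comap ((LinearMap.ker φ).restrictScalars K).subtype).subtype)
        (fun x => x.2)) ?_
    intro a b hab
    apply Subtype.ext
    apply Subtype.ext
    exact congrArg (fun z : ↥(πN u) => (z : N)) hab
  · intro u τ x hx
    exact hNmul u τ x.1 hx
  · intro u hu
    simp only [hNvan u hu, Submodule.comap_bot, Submodule.ker_subtype]
    exact eq_bot_iff.mpr fun x hx => (Submodule.mem_bot K).mpr (Subtype.ext ((Submodule.mem_bot K).mp hx))
  · intro u τ hchain hmax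
    obtain ⟨hm, hi, hs⟩ := hNbij u τ hchain hmax
    obtain ⟨hMm, hMi, hMs⟩ := hMbij u τ hchain hmax
    refine ⟨?_, ?_, ?_⟩
    · intro x hx
      exact hm hx
    · intro x hx y hy hxy
      exact Subtype.ext (hi hx hy (congrArg Subtype.val hxy))
    · intro y hy
      obtain ⟨x, hx, hxy0⟩ := hs hy
      have hxy : (MvPolynomial.X τ : MvPolynomial (Phat P) K) • x = (y : N) := hxy0
      have hxker : x ∈ LinearMap.ker φ := by
        have h0 : (MvPolynomial.X τ : MvPolynomial (Phat P) K) • φ x = (MvPolynomial.X τ : MvPolynomial (Phat P) K) • (0 : M) := by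
          rw [smul_zero, ← map_smul, hxy, LinearMap.mem_ker.mp y.2]
        exact LinearMap.mem_ker.mpr (hMi (hdeg u x hx) (πM u).zero_mem h0)
      exact ⟨⟨x, hxker⟩, hx, Subtype.ext hxy⟩
  -- ========== RANGE ==========
  · refine internal_comap hMint _ ?_
    intro f hf hs i
    obtain ⟨w, _, hww⟩ := hrange f hf hs i
    exact ⟨w, hww⟩
  · exact Module.Finite.range φ
  · intro u
    haveI := hMfd u
    beta_reduce
    refine FiniteDimensional.of_injective
      (LinearMap.codRestrict (πM u) (((LinearMap.range φ).restrictScalars K).subtype.comp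
        ((πM u).comap ((LinearMap.range φ).restrictScalars K).subtype).subtype)
        (fun x => x.2)) ?_
    intro a b hab
    apply Subtype.ext
    apply Subtype.ext
    exact congrArg (fun z : ↥(πM u) => (z : M)) hab
  · intro u τ x hx
    exact hMmul u τ x.1 hx
  · intro u hu
    simp only [hMvan u hu, Submodule.comap_bot, Submodule.ker_subtype]
    exact eq_bot_iff.mpr fun x hx => (Submodule.mem_bot K).mpr (Subtype.ext ((Submodule.mem_bot K).mp hx))
  · intro u τ hchain hmax
    obtain ⟨hNm, hNi, hNs⟩ := hNbij u τ hchain hmax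
    obtain ⟨hMm, hMi, hMs⟩ := hMbij u τ hchain hmax
    refine ⟨?_, ?_, ?_⟩
    · intro x hx
      exact hMm hx
    · intro x hx y hy hxy
      exact Subtype.ext (hMi hx hy (congrArg Subtype.val hxy))
    · intro z hz
      obtain ⟨x, hx, hxz0⟩ := hMs hz
      have hxz : (MvPolynomial.X τ : MvPolynomial (Phat P) K) • x = (z : M) := hxz0
      have hxrange : x ∈ LinearMap.range φ := by
        obtain ⟨w, hw, hww⟩ := hrange1 _ z.1 hz z.2
        obtain ⟨m, hm, hmw0⟩ := hNs hw
        have hmw : (MvPolynomial.X τ : MvPolynomial (Phat P) K) • m = w := hmw0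
        have : (MvPolynomial.X τ : MvPolynomial (Phat P) K) • φ m = (MvPolynomial.X τ : MvPolynomial (Phat P) K) • x := by
          rw [← map_smul, hmw, hww, hxz]
        have := hMi (hdeg u m hm) hx this
        exact ⟨m, this⟩
      exact ⟨⟨x, hxrange⟩, hx, Subtype.ext hxz⟩
  -- ========== COKERNEL ==========
  · have hsurj : Function.Surjective ⇑((LinearMap.range φ).mkQ.restrictScalars K) := by
      intro z
      obtain ⟨y, hy⟩ := Submodule.mkQ_surjective _ z
      exact ⟨y, hy⟩
    refine internal_map hMint ((LinearMap.range φ).mkQ.restrictScalars K) hsurj ?_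
    intro f hf hs i
    have hsr : (f.sum fun _ m => m) ∈ LinearMap.range φ := by
      have h := LinearMap.mem_ker.mp hs
      rwa [LinearMap.restrictScalars_apply, Submodule.mkQ_apply,
        Submodule.Quotient.mk_eq_zero] at h
    obtain ⟨w, _, hww⟩ := hrange f hf hsr i
    have : f i ∈ LinearMap.range φ := ⟨w, hww⟩
    rw [LinearMap.mem_ker, LinearMap.restrictScalars_apply, Submodule.mkQ_apply,
      Submodule.Quotient.mk_eq_zero]
    exact this
  · haveI := hMfin
    exact Module.Finite.of_surjective (LinearMap.range φ).mkQ (Submodule.mkQ_surjective _)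
  · intro u
    haveI := hMfd u
    beta_reduce
    have heq : (πM u).map ((LinearMap.range φ).mkQ.restrictScalars K) =
        LinearMap.range (((LinearMap.range φ).mkQ.restrictScalars K) ∘ₗ (πM u).subtype) := by
      rw [LinearMap.range_comp, Submodule.range_subtype]
    rw [heq]
    infer_instance
  · intro u τ x hx
    obtain ⟨y, hy, rfl⟩ := hx
    refine ⟨(MvPolynomial.X τ : MvPolynomial (Phat P) K) • y, hMmul u τ y hy, ?_⟩
    simp only [LinearMap.restrictScalars_apply, Submodule.mkQ_apply]
    rw [← Submodule.Quotient.mk_smul]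
  · intro u hu
    simp only [hMvan u hu, Submodule.map_bot]
  · intro u τ hchain hmax
    obtain ⟨hNm, hNi, hNs⟩ := hNbij u τ hchain hmax
    obtain ⟨hMm, hMi, hMs⟩ := hMbij u τ hchain hmax
    have hq : ∀ y : M, ((LinearMap.range φ).mkQ.restrictScalars K) ((MvPolynomial.X τ : MvPolynomial (Phat P) K) • y)
        = (MvPolynomial.X τ : MvPolynomial (Phat P) K) • ((LinearMap.range φ).mkQ.restrictScalars K) y := by
      intro y
      simp only [LinearMap.restrictScalars_apply, Submodule.mkQ_apply]
      rw [← Submodule.Quotient.mk_smul]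
    refine ⟨?_, ?_, ?_⟩
    · rintro z ⟨y, hy, rfl⟩
      exact ⟨(MvPolynomial.X τ : MvPolynomial (Phat P) K) • y, hMmul u τ y hy, (hq y).symm⟩
    · rintro z1 hz1 z2 hz2 hz12
      obtain ⟨x1, hx1, rfl⟩ := hz1
      obtain ⟨x2, hx2, rfl⟩ := hz2
      simp only [← hq] at hz12
      have hdiff : (MvPolynomial.X τ : MvPolynomial (Phat P) K) • (x1 - x2) ∈ LinearMap.range φ := by
        rw [smul_sub, ← Submodule.Quotient.mk_eq_zero (LinearMap.range φ)]
        have : ((LinearMap.range φ).mkQ.restrictScalars K)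
            ((MvPolynomial.X τ : MvPolynomial (Phat P) K) • x1 - (MvPolynomial.X τ : MvPolynomial (Phat P) K) • x2) = 0 := by
          rw [map_sub, hz12, sub_self]
        simpa using this
      obtain ⟨w, hw, hww⟩ := hrange1 _ _ (hMmul u τ _ (Submodule.sub_mem _ hx1 hx2)) hdiff
      obtain ⟨m, hm, hmw0⟩ := hNs hw
      have hmw : (MvPolynomial.X τ : MvPolynomial (Phat P) K) • m = w := hmw0
      have heq2 : (MvPolynomial.X τ : MvPolynomial (Phat P) K) • φ m = (MvPolynomial.X τ : MvPolynomial (Phat P) K) • (x1 - x2) := by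
        rw [← map_smul, hmw, hww]
      have := hMi (hdeg u m hm) (Submodule.sub_mem _ hx1 hx2) heq2
      have hsub : x1 - x2 ∈ LinearMap.range φ := ⟨m, this⟩
      simp only [LinearMap.restrictScalars_apply, Submodule.mkQ_apply]
      rw [Submodule.Quotient.eq]
      exact hsub
    · rintro z ⟨y, hy, rfl⟩
      obtain ⟨x, hx, hxy0⟩ := hMs hy
      have hxy : (MvPolynomial.X τ : MvPolynomial (Phat P) K) • x = y := hxy0
      refine ⟨((LinearMap.range φ).mkQ.restrictScalars K) x, ⟨x, hx, rfl⟩, ?_⟩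
      show (MvPolynomial.X τ : MvPolynomial (Phat P) K) • _ = _
      rw [← hq, hxy]
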